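/- Let Γ be a group, n ≥ 1, and d_n ∈ M_{k_{n+1}×k_n}(ℝΓ). Let ψ : M_{k_n}(ℝΓ) → ℝ be a positive hermitian linear functional which vanishes on im D_n = {d_n* a d_n : a ∈ M_{k_{n+1}}(ℝΓ)}. Then there exist a real Hilbert space H, a unitary representation π : Γ → U(H), and a vector z ∈ H^{k_n} such that π(d_n)z = 0 (i.e. z is an n-cocycle), z is cyclic (π(M_{k_n}(ℝΓ))z is dense in H^{k_n}), and ψ(a) = ⟨π(a)z, z⟩ for every a ∈ M_{k_n}(ℝΓ). -/

import Mathlib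

open scoped BigOperators
noncomputable section

universe u v w

/-- The star operation on the real group algebra, determined by `γ ↦ γ⁻¹`. -/
def rgStar {G : Type u} [Group G] (x : MonoidAlgebra ℝ G) : MonoidAlgebra ℝ G :=
  MonoidAlgebra.mapDomain (fun g : G => g⁻¹) x

/-- The adjoint of a matrix over the real group algebra:
transpose and apply `rgStar` entrywise. -/
def adjM {G : Type u} [Group G] {m n : Type*}
    (a : Matrix m n (MonoidAlgebra ℝ G)) : Matrix n m (MonoidAlgebra ℝ G) :=
  Matrix.of fun i j => rgStar (a j i)

/-- A square matrix over the real group algebra is a sum of hermitian squares. -/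
def IsSOS {G : Type u} [Group G] {p : Type*} [Fintype p]
    (x : Matrix p p (MonoidAlgebra ℝ G)) : Prop :=
  ∃ (m : ℕ) (a : Fin m → Matrix p p (MonoidAlgebra ℝ G)),
    x = ∑ i, adjM (a i) * a i

/-- A unitary representation of `G` on a real Hilbert space. -/
structure URep (G : Type u) [Group G] : Type (max u (v + 1)) where
  H : Type v
  [normed : NormedAddCommGroup H]
  [ips : InnerProductSpace ℝ H]
  [complete : CompleteSpace H]
  π : G →* (H →L[ℝ] H)
  isometric : ∀ (γ : G) (x : H), ‖π γ x‖ = ‖x‖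

attribute [instance] URep.normed URep.ips URep.complete

/-- The extension of a unitary representation to the real group algebra. -/
noncomputable def URep.alg {G : Type u} [Group G] (ρ : URep.{u, v} G) :
    MonoidAlgebra ℝ G →ₐ[ℝ] (ρ.H →L[ℝ] ρ.H) :=
  MonoidAlgebra.lift ℝ (ρ.H →L[ℝ] ρ.H) G ρ.π

/-- The entrywise application of a unitary representation to a matrix over the
real group algebra, acting on tuples of vectors. -/
noncomputable def URep.mat {G : Type u} [Group G] (ρ : URep.{u, v} G)
    {p q : Type*} [Fintype q] (a : Matrix p q (MonoidAlgebra ℝ G))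
    (z : q → ρ.H) : p → ρ.H :=
  fun i => ∑ j, ρ.alg (a i j) (z j)

/-- The inner product on a finite power of a real Hilbert space. -/
noncomputable def pInner {G : Type u} [Group G] (ρ : URep.{u, v} G)
    {p : Type*} [Fintype p] (x y : p → ρ.H) : ℝ :=
  ∑ i, inner ℝ (x i) (y i)

section Aux

variable {G : Type u} [Group G]

lemma rgStar_single (g : G) (r : ℝ) :
    rgStar (MonoidAlgebra.single g r) = MonoidAlgebra.single g⁻¹ r :=
  MonoidAlgebra.mapDomain_single

lemma rgStar_single' (g : G) (r : ℝ) :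
    rgStar (MonoidAlgebra.single g r : MonoidAlgebra ℝ G) = MonoidAlgebra.single g⁻¹ r :=
  MonoidAlgebra.mapDomain_single

lemma rgStar_add (x y : MonoidAlgebra ℝ G) : rgStar (x + y) = rgStar x + rgStar y :=
  MonoidAlgebra.mapDomain_add _ _ _

lemma rgStar_zero : rgStar (0 : MonoidAlgebra ℝ G) = 0 := MonoidAlgebra.mapDomain_zero _

lemma rgStar_smul (r : ℝ) (x : MonoidAlgebra ℝ G) : rgStar (r • x) = r • rgStar x :=
  MonoidAlgebra.mapDomain_smul _ r x

lemma rgStar_one : rgStar (1 : MonoidAlgebra ℝ G) = 1 := by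
  rw [MonoidAlgebra.one_def, rgStar_single, inv_one]

lemma rgStar_mul (x y : MonoidAlgebra ℝ G) : rgStar (x * y) = rgStar y * rgStar x := by
  induction x using MonoidAlgebra.induction_linear with
  | zero => simp [rgStar, MonoidAlgebra.mapDomain_zero]
  | add a b ha hb =>
    rw [add_mul, rgStar_add, rgStar_add, ha, hb, mul_add]
  | single g r =>
    induction y using MonoidAlgebra.induction_linear with
    | zero => simp [rgStar, MonoidAlgebra.mapDomain_zero]
    | add a b ha hb =>
      rw [mul_add, rgStar_add, rgStar_add, ha, hb, add_mul]
    | single h s =>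
      rw [MonoidAlgebra.single_mul_single, rgStar_single, rgStar_single', rgStar_single',
        MonoidAlgebra.single_mul_single, mul_inv_rev, mul_comm s r]

lemma rgStar_rgStar (x : MonoidAlgebra ℝ G) : rgStar (rgStar x) = x := by
  induction x using MonoidAlgebra.induction_linear with
  | zero => simp [rgStar, MonoidAlgebra.mapDomain_zero]
  | add a b ha hb => rw [rgStar_add, rgStar_add, ha, hb]
  | single g r => rw [rgStar_single', rgStar_single, inv_inv]

variable (kn : ℕ)
  (ψ : Matrix (Fin kn) (Fin kn) (MonoidAlgebra ℝ G) →ₗ[ℝ] ℝ)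

/-- The semi-inner-product on rows. -/
def BF (u v : Fin kn → MonoidAlgebra ℝ G) : ℝ :=
  ψ (Matrix.of fun i j => rgStar (u i) * v j)

variable {kn}

lemma BF_sum {p : ℕ} (a b : Matrix (Fin p) (Fin kn) (MonoidAlgebra ℝ G)) :
    ∑ l, BF kn ψ (a l) (b l) = ψ (adjM a * b) := by
  have h : adjM a * b = ∑ l, Matrix.of fun i j => rgStar (a l i) * b l j := by
    ext i j
    simp [Matrix.mul_apply, Matrix.sum_apply, adjM]
  simp only [BF]
  rw [h, map_sum]

lemma BF_add_left (u u' v : Fin kn → MonoidAlgebra ℝ G) :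
    BF kn ψ (u + u') v = BF kn ψ u v + BF kn ψ u' v := by
  have h : (Matrix.of fun i j => rgStar ((u + u') i) * v j)
      = (Matrix.of fun i j => rgStar (u i) * v j)
        + (Matrix.of fun i j => rgStar (u' i) * v j) := by
    ext i j
    simp [rgStar_add, add_mul]
  simp only [BF]
  rw [h, map_add]

lemma BF_smul_left (r : ℝ) (u v : Fin kn → MonoidAlgebra ℝ G) :
    BF kn ψ (r • u) v = r * BF kn ψ u v := by
  have h : (Matrix.of fun i j => rgStar ((r • u) i) * v j)
      = r • Matrix.of fun i j => rgStar (u i) * v j := by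
    ext i j
    simp [rgStar_smul, smul_mul_assoc]
  simp only [BF]
  rw [h, map_smul, smul_eq_mul]

lemma BF_symm (hherm : ∀ a, ψ (adjM a) = ψ a) (u v : Fin kn → MonoidAlgebra ℝ G) :
    BF kn ψ u v = BF kn ψ v u := by
  have : (Matrix.of fun i j => rgStar (u i) * v j)
      = adjM (Matrix.of fun i j => rgStar (v i) * u j) := by
    ext i j
    simp [adjM, rgStar_mul, rgStar_rgStar]
  rw [BF, this, hherm]
  rfl

lemma BF_nonneg (hpos : ∀ x, IsSOS x → 0 ≤ ψ x) (u : Fin kn → MonoidAlgebra ℝ G) :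
    0 ≤ BF kn ψ u u := by
  rcases isEmpty_or_nonempty (Fin kn) with he | hne
  · have : (Matrix.of fun i j => rgStar (u i) * u j)
        = (0 : Matrix (Fin kn) (Fin kn) (MonoidAlgebra ℝ G)) := Subsingleton.elim _ _
    rw [BF, this, map_zero]
  · obtain ⟨i0⟩ := hne
    set U : Matrix (Fin kn) (Fin kn) (MonoidAlgebra ℝ G) :=
      Matrix.of fun i j => if i = i0 then u j else 0 with hU
    have key : (Matrix.of fun i j => rgStar (u i) * u j) = adjM U * U := by
      ext i j
      rw [Matrix.mul_apply]
      have h2 : ∀ l, adjM U i l * U l j = if l = i0 then rgStar (u i) * u j else 0 := by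
        intro l
        by_cases h : l = i0 <;> simp [adjM, hU, h, rgStar_zero]
      simp only [h2]
      simp
    rw [BF, key]
    exact hpos _ ⟨1, ![U], by simp⟩

end Aux

set_option maxHeartbeats 1000000
set_option synthInstance.maxHeartbeats 400000

/-- higher GNS, from functionals to cocycles: a positive hermitian
linear functional on `M_{k_n}(ℝΓ)` vanishing on `im D_n` is the matrix coefficient
of a unitary representation at a cyclic vector `z ∈ H^{k_n}` which is a cocycle
(`π(d_n) z = 0`). -/
theorem stmt_7 {G : Type u} [Group G] (n : ℕ) (hn : 1 ≤ n) (kn knext : ℕ)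
    (dn : Matrix (Fin knext) (Fin kn) (MonoidAlgebra ℝ G))
    (ψ : Matrix (Fin kn) (Fin kn) (MonoidAlgebra ℝ G) →ₗ[ℝ] ℝ)
    (hherm : ∀ a : Matrix (Fin kn) (Fin kn) (MonoidAlgebra ℝ G), ψ (adjM a) = ψ a)
    (hpos : ∀ x : Matrix (Fin kn) (Fin kn) (MonoidAlgebra ℝ G), IsSOS x → 0 ≤ ψ x)
    (hvan : ∀ a : Matrix (Fin knext) (Fin knext) (MonoidAlgebra ℝ G),
      ψ (adjM dn * a * dn) = 0) :
    ∃ (ρ : URep.{u, u} G) (z : Fin kn → ρ.H),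
      ρ.mat dn z = 0 ∧
      Dense {w : Fin kn → ρ.H |
        ∃ a : Matrix (Fin kn) (Fin kn) (MonoidAlgebra ℝ G), ρ.mat a z = w} ∧
      ∀ a : Matrix (Fin kn) (Fin kn) (MonoidAlgebra ℝ G),
        ψ a = pInner ρ (ρ.mat a z) z := by
  classical
  letI core : PreInnerProductSpace.Core ℝ (Fin kn → MonoidAlgebra ℝ G) :=
    { inner := BF kn ψ
      conj_inner_symm := fun u v => by simpa using BF_symm ψ hherm v u
      re_inner_nonneg := fun u => by simpa using BF_nonneg ψ hpos u
      add_left := fun u u' v => by simpa using BF_add_left ψ u u' v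
      smul_left := fun u v r => by simpa using BF_smul_left ψ r u v }
  letI : SeminormedAddCommGroup (Fin kn → MonoidAlgebra ℝ G) :=
    InnerProductSpace.Core.toSeminormedAddCommGroup (𝕜 := ℝ)
  letI : NormedSpace ℝ (Fin kn → MonoidAlgebra ℝ G) :=
    InnerProductSpace.Core.toNormedSpace (𝕜 := ℝ)
  have hnormsq : ∀ x : Fin kn → MonoidAlgebra ℝ G,
      ‖x‖ ^ 2 = BF kn ψ x x := fun x => Real.sq_sqrt (core.re_inner_nonneg x)
  letI : InnerProductSpace ℝ (Fin kn → MonoidAlgebra ℝ G) :=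
    { toNormedSpace := inferInstance
      toInner := core.toInner
      norm_sq_eq_re_inner := fun x => hnormsq x
      conj_inner_symm := core.conj_inner_symm
      add_left := core.add_left
      smul_left := core.smul_left }
  have inner_eq : ∀ u v : Fin kn → MonoidAlgebra ℝ G,
      (inner ℝ u v : ℝ) = BF kn ψ u v := fun _ _ => rfl
  -- norm is determined by the inner product
  have hnorm_of_inner : ∀ u v : Fin kn → MonoidAlgebra ℝ G,
      BF kn ψ u u = BF kn ψ v v → ‖u‖ = ‖v‖ := by
    intro u v h
    have h1 := hnormsq u
    have h2 := hnormsq v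
    have hsq : ‖u‖ ^ 2 = ‖v‖ ^ 2 := h1.trans (h.trans h2.symm)
    nlinarith [norm_nonneg u, norm_nonneg v, sq_nonneg (‖u‖ - ‖v‖), sq_nonneg (‖u‖ + ‖v‖)]
  -- the action of G on rows
  let L : G → (Fin kn → MonoidAlgebra ℝ G) →ₗ[ℝ] (Fin kn → MonoidAlgebra ℝ G) := fun γ =>
    { toFun := fun v j => MonoidAlgebra.single γ (1 : ℝ) * v j
      map_add' := fun u v => by funext j; simp [mul_add]
      map_smul' := fun r v => by funext j; simp [mul_smul_comm] }
  have Linner : ∀ (γ : G) (u v : Fin kn → MonoidAlgebra ℝ G),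
      BF kn ψ (L γ u) (L γ v) = BF kn ψ u v := by
    intro γ u v
    unfold L
    simp only [BF, LinearMap.coe_mk, AddHom.coe_mk]
    congr 2
    ext i j
    rw [rgStar_mul, rgStar_single, mul_assoc, ← mul_assoc (MonoidAlgebra.single γ⁻¹ (1:ℝ)),
      MonoidAlgebra.single_mul_single, inv_mul_cancel, one_mul, ← MonoidAlgebra.one_def, one_mul]
  have Lnorm : ∀ (γ : G) (v : Fin kn → MonoidAlgebra ℝ G), ‖L γ v‖ = ‖v‖ :=
    fun γ v => hnorm_of_inner _ _ (Linner γ v v)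
  have Lcont : ∀ γ : G, Continuous (L γ) := by
    intro γ
    exact (AddMonoidHomClass.isometry_of_norm (L γ) (Lnorm γ)).continuous
  -- the action on the completion
  let T : G → UniformSpace.Completion (Fin kn → MonoidAlgebra ℝ G) →+
      UniformSpace.Completion (Fin kn → MonoidAlgebra ℝ G) := fun γ =>
    AddMonoidHom.completion (L γ).toAddMonoidHom (Lcont γ)
  have Tcoe : ∀ (γ : G) (v : Fin kn → MonoidAlgebra ℝ G),
      T γ ↑v = ((L γ v : Fin kn → MonoidAlgebra ℝ G) :
        UniformSpace.Completion (Fin kn → MonoidAlgebra ℝ G)) := fun γ v =>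
    AddMonoidHom.completion_coe _ _ v
  have Tcont : ∀ γ : G, Continuous (T γ) := fun γ =>
    AddMonoidHom.continuous_completion _ _
  have Tsmul : ∀ (γ : G) (r : ℝ) (x : UniformSpace.Completion (Fin kn → MonoidAlgebra ℝ G)),
      T γ (r • x) = r • T γ x := by
    intro γ r x
    refine UniformSpace.Completion.induction_on x ?_ ?_
    · exact isClosed_eq ((Tcont γ).comp (continuous_const_smul r))
        ((continuous_const_smul r).comp (Tcont γ))
    · intro v
      rw [← UniformSpace.Completion.coe_smul, Tcoe, Tcoe, map_smul,
        UniformSpace.Completion.coe_smul]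
  let TL : G → (UniformSpace.Completion (Fin kn → MonoidAlgebra ℝ G) →L[ℝ]
      UniformSpace.Completion (Fin kn → MonoidAlgebra ℝ G)) := fun γ =>
    { toLinearMap :=
        { toFun := T γ
          map_add' := fun x y => (T γ).map_add x y
          map_smul' := fun r x => Tsmul γ r x }
      cont := Tcont γ }
  have TLcoe : ∀ (γ : G) (v : Fin kn → MonoidAlgebra ℝ G),
      TL γ ↑v = ((L γ v : Fin kn → MonoidAlgebra ℝ G) :
        UniformSpace.Completion (Fin kn → MonoidAlgebra ℝ G)) := Tcoe
  -- the representation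
  let Prep : G →* (UniformSpace.Completion (Fin kn → MonoidAlgebra ℝ G) →L[ℝ]
      UniformSpace.Completion (Fin kn → MonoidAlgebra ℝ G)) :=
    { toFun := TL
      map_one' := by
        ext x
        refine UniformSpace.Completion.induction_on x ?_ ?_
        · exact isClosed_eq (TL 1).continuous (ContinuousLinearMap.id ℝ _).continuous
        · intro v
          rw [ContinuousLinearMap.one_apply]
          rw [show (TL 1) ↑v = _ from TLcoe 1 v]
          congr 1
          funext j
          simp [L, ← MonoidAlgebra.one_def]
      map_mul' := fun γ δ => by
        ext x
        refine UniformSpace.Completion.induction_on x ?_ ?_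
        · exact isClosed_eq (TL (γ * δ)).continuous
            ((TL γ).continuous.comp (TL δ).continuous)
        · intro v
          rw [ContinuousLinearMap.mul_apply]
          rw [show (TL (γ * δ)) ↑v = _ from TLcoe (γ * δ) v,
            show (TL δ) ↑v = _ from TLcoe δ v,
            show (TL γ) ↑(L δ v) = _ from TLcoe γ (L δ v)]
          congr 1
          funext j
          show MonoidAlgebra.single (γ * δ) (1:ℝ) * v j
            = MonoidAlgebra.single γ (1:ℝ) * (MonoidAlgebra.single δ (1:ℝ) * v j)
          rw [← mul_assoc, MonoidAlgebra.single_mul_single, one_mul] }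
  have hiso : ∀ (γ : G) (x : UniformSpace.Completion (Fin kn → MonoidAlgebra ℝ G)),
      ‖Prep γ x‖ = ‖x‖ := by
    intro γ x
    refine UniformSpace.Completion.induction_on x ?_ ?_
    · exact isClosed_eq (TL γ).continuous.norm continuous_norm
    · intro v
      rw [show (Prep γ) ↑v = _ from TLcoe γ v, UniformSpace.Completion.norm_coe,
        UniformSpace.Completion.norm_coe, Lnorm]
  let ρ : URep.{u, u} G :=
    { H := UniformSpace.Completion (Fin kn → MonoidAlgebra ℝ G)
      π := Prep
      isometric := hiso }
  -- the cyclic vector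
  let e : Fin kn → (Fin kn → MonoidAlgebra ℝ G) := fun i =>
    (1 : Matrix (Fin kn) (Fin kn) (MonoidAlgebra ℝ G)) i
  let z : Fin kn → ρ.H := fun i => ↑(e i)
  -- the extension of the representation to the group algebra, on coe vectors
  have algCoe : ∀ (x : MonoidAlgebra ℝ G) (v : Fin kn → MonoidAlgebra ℝ G),
      ρ.alg x ↑v = ((fun j => x * v j : Fin kn → MonoidAlgebra ℝ G) : ρ.H) := by
    intro x v
    induction x using MonoidAlgebra.induction_linear with
    | zero =>
      rw [map_zero]
      have : (fun j => (0 : MonoidAlgebra ℝ G) * v j) = (0 : Fin kn → MonoidAlgebra ℝ G) := by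
        funext j; simp
      rw [this, UniformSpace.Completion.coe_zero, ContinuousLinearMap.zero_apply]
    | add a b ha hb =>
      rw [map_add, ContinuousLinearMap.add_apply, ha, hb,
        ← UniformSpace.Completion.coe_add]
      congr 1
      funext j
      simp [add_mul]
    | single g r =>
      have h1 : ρ.alg (MonoidAlgebra.single g r) = r • ρ.π g := by
        show (MonoidAlgebra.lift ℝ _ G ρ.π) (MonoidAlgebra.single g r) = r • ρ.π g
        rw [MonoidAlgebra.lift_single]
      rw [h1, ContinuousLinearMap.smul_apply]
      have h2 : ρ.π g ↑v = ((L g v : Fin kn → MonoidAlgebra ℝ G) : ρ.H) := TLcoe g v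
      rw [h2, ← UniformSpace.Completion.coe_smul]
      congr 1
      funext j
      show r • (MonoidAlgebra.single g (1:ℝ) * v j) = MonoidAlgebra.single g r * v j
      rw [← smul_mul_assoc, MonoidAlgebra.smul_single', mul_one]
  -- the matrix action on coe vectors
  have matz : ∀ (p : ℕ) (a : Matrix (Fin p) (Fin kn) (MonoidAlgebra ℝ G)) (i : Fin p),
      ρ.mat a z i = ↑(a i) := by
    intro p a i
    show (∑ j, ρ.alg (a i j) (z j)) = _
    have h1 : ∀ j, ρ.alg (a i j) (z j)
        = ((fun j' => a i j * e j j' : Fin kn → MonoidAlgebra ℝ G) : ρ.H) := by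
      intro j
      exact algCoe (a i j) (e j)
    simp only [h1]
    have h2 : ∀ s : Fin kn → (Fin kn → MonoidAlgebra ℝ G),
        (∑ j, (↑(s j) : ρ.H)) = ↑(∑ j, s j) := by
      intro s
      rw [← UniformSpace.Completion.coe_toComplₗᵢ (𝕜 := ℝ)
        (E := Fin kn → MonoidAlgebra ℝ G)]
      exact (map_sum (UniformSpace.Completion.toComplₗᵢ (𝕜 := ℝ)).toLinearMap s
        Finset.univ).symm
    rw [h2 (fun j => fun j' => a i j * e j j')]
    congr 1
    funext j'
    rw [Finset.sum_apply]
    have : ∀ j, a i j * e j j' = if j = j' then a i j else 0 := by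
      intro j
      by_cases h : j = j' <;> simp [e, Matrix.one_apply, h]
    simp only [this]
    simp
  -- conclusion
  refine ⟨ρ, z, ?_, ?_, ?_⟩
  · -- cocycle condition
    funext i
    rw [matz knext dn i]
    have hsum : ∑ l, BF kn ψ (dn l) (dn l) = 0 := by
      rw [BF_sum ψ dn dn]
      have h := hvan 1
      rwa [Matrix.mul_one] at h
    have hz : BF kn ψ (dn i) (dn i) = 0 := by
      have h := (Finset.sum_eq_zero_iff_of_nonneg
        (fun l _ => BF_nonneg ψ hpos (dn l))).1 hsum i (Finset.mem_univ i)
      exact h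
    have hnz : ‖(dn i : Fin kn → MonoidAlgebra ℝ G)‖ = 0 := by
      have h := hnormsq (dn i)
      have : ‖(dn i : Fin kn → MonoidAlgebra ℝ G)‖ ^ 2 = 0 := by
        rw [h]; simpa [inner_eq] using hz
      exact pow_eq_zero_iff two_ne_zero |>.1 this
    show ((dn i : Fin kn → MonoidAlgebra ℝ G) : ρ.H) = (0 : Fin knext → ρ.H) i
    rw [Pi.zero_apply]
    rw [← norm_eq_zero, UniformSpace.Completion.norm_coe]
    exact hnz
  · -- density
    have hset : {w : Fin kn → ρ.H |
        ∃ a : Matrix (Fin kn) (Fin kn) (MonoidAlgebra ℝ G), ρ.mat a z = w}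
        = Set.univ.pi (fun _ : Fin kn =>
            Set.range ((↑) : (Fin kn → MonoidAlgebra ℝ G) → ρ.H)) := by
      ext w
      constructor
      · rintro ⟨a, rfl⟩ i _
        exact ⟨a i, (matz kn a i).symm⟩
      · intro hw
        choose v hv using fun i => hw i (Set.mem_univ i)
        refine ⟨Matrix.of v, ?_⟩
        funext i
        rw [matz kn (Matrix.of v) i]
        exact hv i
    rw [hset]
    exact dense_pi Set.univ
      (fun i _ => UniformSpace.Completion.denseRange_coe)
  · -- matrix coefficient
    intro a
    show ψ a = ∑ i, (inner ℝ (ρ.mat a z i) (z i) : ℝ)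
    have h1 : ∀ i : Fin kn, (inner ℝ (ρ.mat a z i) (z i) : ℝ) = BF kn ψ (a i) (e i) := by
      intro i
      rw [matz kn a i]
      show (inner ℝ ((a i : Fin kn → MonoidAlgebra ℝ G) : ρ.H) ((e i : _) : ρ.H) : ℝ) = _
      rw [UniformSpace.Completion.inner_coe]
      exact inner_eq (a i) (e i)
    simp only [h1]
    have h2 : ∑ i, BF kn ψ (a i) (e i) = ψ (adjM a * 1) := BF_sum ψ a 1
    rw [h2, Matrix.mul_one, hherm]
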